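/- Let H be a proper subgroup of a finite group G, V an F H-module (char F ∤ |G|), and W = Ind_H^G V with S(V) regarded as a subalgebra of S(W). Then (S(W)_+^G S(W)) ∩ S(V) ⊆ S(V)_+^H S(V)_+, i.e., any element of the Hilbert ideal of S(W) lying in S(V) is a sum of products of a positive-degree H-invariant of S(V) with a positive-degree element of S(V). -/
import Mathlib


noncomputable section
open MvPolynomial

variable {F : Type} [Field F]

/-- The algebra homomorphism between polynomial algebras (viewed as symmetric algebras)
induced by a linear map between the spaces of variables (the degree one components). -/
noncomputable def algOf {α β : Type} [Fintype α] [Fintype β] [DecidableEq α]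
    (f : (α → F) →ₗ[F] (β → F)) :
    MvPolynomial α F →ₐ[F] MvPolynomial β F :=
  aeval fun j => ∑ i, f (Pi.single j 1) i • X i

/-- The embedding of the space of linear forms into the polynomial algebra. -/
noncomputable def lin {β : Type} [Fintype β] (w : β → F) : MvPolynomial β F :=
  ∑ i, w i • X i

/-- The subalgebra of `G`-invariants of the symmetric algebra of a representation. -/
def invariants {G : Type} [Group G] {α : Type} [Fintype α] [DecidableEq α]
    (ρ : Representation F G (α → F)) : Subalgebra F (MvPolynomial α F) where
  carrier := {p | ∀ g : G, algOf (ρ g) p = p}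
  mul_mem' := fun ha hb g => by rw [map_mul, ha g, hb g]
  add_mem' := fun ha hb g => by rw [map_add, ha g, hb g]
  algebraMap_mem' := fun r g => (algOf (ρ g)).commutes r

variable {G : Type} [Group G] {α : Type} [Fintype α] [DecidableEq α]

/-- The invariant ring is generated as an `F`-algebra in degrees at most `d`. -/
def genLE (ρ : Representation F G (α → F)) (d : ℕ) : Prop :=
  Algebra.adjoin F {p : MvPolynomial α F | p ∈ invariants ρ ∧ p.totalDegree ≤ d}
    = invariants ρ

/-- The Noether number `β(G,W)` of a representation. -/
def noether (ρ : Representation F G (α → F)) : ℕ := sInf {d | genLE ρ d}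

/-- The Hilbert ideal: the ideal of `S(W)` generated by the invariants of positive degree. -/
def hilbertIdeal (ρ : Representation F G (α → F)) : Ideal (MvPolynomial α F) :=
  Ideal.span {p | p ∈ invariants ρ ∧ constantCoeff p = 0}

/-- `b(G,W)`: the top degree of the algebra of coinvariants `S(W)/S(W)₊^G S(W)`. -/
def coinvTop (ρ : Representation F G (α → F)) : ℕ :=
  sSup {d | ∃ p : MvPolynomial α F, p.IsHomogeneous d ∧ p ∉ hilbertIdeal ρ}

/-- `b_k(G,W)`: the top degree of `S(W)/((S(W)₊^G)^k S(W))`. -/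
def coinvTopK (ρ : Representation F G (α → F)) (k : ℕ) : ℕ :=
  sSup {d | ∃ p : MvPolynomial α F, p.IsHomogeneous d ∧ p ∉ (hilbertIdeal ρ) ^ k}

/-- The span of all products of `k` positive-degree invariants,
i.e. `(S(W)₊^G)^k` computed inside the invariant ring. -/
def prodPow (ρ : Representation F G (α → F)) (k : ℕ) : Submodule F (MvPolynomial α F) :=
  Submodule.span F {x | ∃ f : Fin k → MvPolynomial α F,
    (∀ i, f i ∈ invariants ρ ∧ constantCoeff (f i) = 0) ∧ x = ∏ i, f i}

/-- The `k`-th Noether number `β_k(G,W)`, the top degree of `S(W)^G/(S(W)₊^G)^{k+1}`. -/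
def noetherK (ρ : Representation F G (α → F)) (k : ℕ) : ℕ :=
  sSup {d | ∃ p, p ∈ invariants ρ ∧ p.IsHomogeneous d ∧ p ∉ prodPow ρ (k+1)}

/-- `β(G)`: the supremum of the Noether numbers over all finite dimensional modules. -/
def noetherSup (F G : Type) [Field F] [Group G] : ℕ∞ :=
  ⨆ (n : ℕ) (ρ : Representation F G (Fin n → F)), (noether ρ : ℕ∞)

/-- `b(G)`: the supremum of `b(G,W)` over all finite dimensional modules. -/
def coinvSup (F G : Type) [Field F] [Group G] : ℕ∞ :=
  ⨆ (n : ℕ) (ρ : Representation F G (Fin n → F)), (coinvTop ρ : ℕ∞)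

/-- `β_k(G)`: the supremum of the `k`-th Noether numbers over all modules. -/
def noetherKSup (F G : Type) [Field F] [Group G] (k : ℕ) : ℕ∞ :=
  ⨆ (n : ℕ) (ρ : Representation F G (Fin n → F)), (noetherK ρ k : ℕ∞)


namespace Stmt9Aux

lemma lin_single {β : Type} [Fintype β] [DecidableEq β] (i : β) :
    lin (Pi.single i (1:F)) = X i := by
  rw [lin, Finset.sum_eq_single i]
  · simp
  · intro b _ hb
    rw [Pi.single_eq_of_ne hb, zero_smul]
  · intro h; exact absurd (Finset.mem_univ i) h

def linL (F : Type) [Field F] (β : Type) [Fintype β] : (β → F) →ₗ[F] MvPolynomial β F where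
  toFun := lin
  map_add' a b := by simp [lin, add_smul, Finset.sum_add_distrib]
  map_smul' c a := by simp [lin, Finset.smul_sum, smul_smul]

lemma algOf_apply_X {α β : Type} [Fintype α] [Fintype β] [DecidableEq α]
    (f : (α → F) →ₗ[F] (β → F)) (j : α) :
    algOf f (X j) = lin (f (Pi.single j 1)) := by
  rw [algOf, aeval_X]; rfl

lemma algOf_lin {α β : Type} [Fintype α] [Fintype β] [DecidableEq β]
    (g : (β → F) →ₗ[F] (α → F)) (w : β → F) :
    algOf g (lin w) = lin (g w) := by
  have h : (algOf g).toLinearMap ∘ₗ linL F β = linL F α ∘ₗ g := by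
    apply Module.Basis.ext (Pi.basisFun F β)
    intro i
    simp only [Pi.basisFun_apply, LinearMap.comp_apply, AlgHom.toLinearMap_apply]
    show algOf g (lin (Pi.single i 1)) = lin (g (Pi.single i 1))
    rw [lin_single, algOf_apply_X]
  exact LinearMap.congr_fun h w

lemma algOf_comp {α β γ : Type} [Fintype α] [Fintype β] [Fintype γ]
    [DecidableEq α] [DecidableEq β]
    (f : (α → F) →ₗ[F] (β → F)) (g : (β → F) →ₗ[F] (γ → F)) (p : MvPolynomial α F) :
    algOf g (algOf f p) = algOf (g ∘ₗ f) p := by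
  suffices h : (algOf g).comp (algOf f) = algOf (g ∘ₗ f) from DFunLike.congr_fun h p
  apply algHom_ext
  intro j
  rw [AlgHom.comp_apply, algOf_apply_X, algOf_apply_X, algOf_lin]
  rfl

lemma constantCoeff_algOf {α β : Type} [Fintype α] [Fintype β] [DecidableEq α]
    (f : (α → F) →ₗ[F] (β → F)) (p : MvPolynomial α F) :
    constantCoeff (algOf f p) = constantCoeff p := by
  have h : (aeval (fun _ : β => (0:F)) : MvPolynomial β F →ₐ[F] F).comp (algOf f)
      = aeval (fun _ : α => (0:F)) := by
    apply algHom_ext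
    intro j
    rw [AlgHom.comp_apply, algOf_apply_X, aeval_X, lin]
    simp
  have h2 := DFunLike.congr_fun h p
  rw [AlgHom.comp_apply, aeval_zero', aeval_zero'] at h2
  simpa using h2

lemma algOf_id {α : Type} [Fintype α] [DecidableEq α] (p : MvPolynomial α F) :
    algOf (LinearMap.id : (α → F) →ₗ[F] (α → F)) p = p := by
  suffices h : algOf (LinearMap.id : (α → F) →ₗ[F] (α → F)) = AlgHom.id F _ from
    DFunLike.congr_fun h p
  apply algHom_ext
  intro j
  rw [algOf_apply_X]
  show lin (Pi.single j 1) = X j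
  exact lin_single j

lemma algOf_zero {α β : Type} [Fintype α] [Fintype β] [DecidableEq α]
    (p : MvPolynomial α F) (hp : constantCoeff p = 0) :
    algOf (0 : (α → F) →ₗ[F] (β → F)) p = 0 := by
  have h : algOf (0 : (α → F) →ₗ[F] (β → F))
      = (aeval fun _ : α => (0 : MvPolynomial β F)) := by
    unfold algOf; congr 1; funext j; simp
  rw [h, aeval_zero', hp, map_zero]

lemma mem_invariants_iff {G : Type} [Group G] {α : Type} [Fintype α] [DecidableEq α]
    (ρ : Representation F G (α → F)) (p : MvPolynomial α F) :
    p ∈ invariants ρ ↔ ∀ g : G, algOf (ρ g) p = p := Iff.rfl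

end Stmt9Aux

open Stmt9Aux in
/-- the intersection of the Hilbert ideal of `S(W)` with `S(V)` is
contained in `S(V)₊^H S(V)₊`. -/
theorem stmt9
    {G : Type} [Group G] [Fintype G]
    (hchar : (Fintype.card G : F) ≠ 0)
    (H : Subgroup G) {nV m : ℕ}
    (ρ : Representation F H (Fin nV → F))
    (σ : Representation F G (Fin m → F))
    (ι : (Fin nV → F) →ₗ[F] (Fin m → F)) (hι : Function.Injective ι)
    (hequiv : ∀ h : H, σ h ∘ₗ ι = ι ∘ₗ ρ h)
    (C : Set G) (hC : Subgroup.IsComplement C (H : Set G)) (h1 : (1:G) ∈ C)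
    (hindep : iSupIndep fun c : C => (LinearMap.range ι).map (σ c.1))
    (hspan : ⨆ c : C, (LinearMap.range ι).map (σ c.1) = ⊤)
    (hHG : H ≠ ⊤) :
    ∀ q : MvPolynomial (Fin nV) F, algOf ι q ∈ hilbertIdeal σ →
      q ∈ Submodule.span F {x | ∃ a b : MvPolynomial (Fin nV) F,
        a ∈ invariants ρ ∧ MvPolynomial.constantCoeff a = 0 ∧
        MvPolynomial.constantCoeff b = 0 ∧ x = a * b} := by
  classical
  intro q hq
  -- `c ∈ C` with `c ∈ H` forces `c = 1`
  have hCH : ∀ c ∈ C, c ∈ H → c = 1 := by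
    intro c hc hcH
    have heq : (fun x : C × (H : Set G) => (x.1.1 : G) * x.2.1)
        (⟨c, hc⟩, ⟨1, H.one_mem⟩) = (fun x : C × (H : Set G) => (x.1.1 : G) * x.2.1)
        (⟨1, h1⟩, ⟨c, hcH⟩) := by simp
    have h2 := hC.1 heq
    exact congrArg (fun x => (x.1.1 : G)) h2
  set M : C → Submodule F (Fin m → F) := fun c : C => (LinearMap.range ι).map (σ c.1)
    with hMdef
  set i0 : C := ⟨1, h1⟩ with hi0
  set u' : Submodule F (Fin m → F) := ⨆ (c : C) (_ : c ≠ i0), M c with hu'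
  have hM1 : M i0 = LinearMap.range ι := by
    have hσ1 : σ (1:G) = LinearMap.id := by rw [map_one]; rfl
    rw [hMdef]
    show (LinearMap.range ι).map (σ (1:G)) = LinearMap.range ι
    rw [hσ1, Submodule.map_id]
  have hcompl : IsCompl (LinearMap.range ι) u' := by
    rw [← hM1]
    constructor
    · exact hindep i0
    · rw [codisjoint_iff, eq_top_iff, ← hspan]
      apply iSup_le
      intro c
      by_cases hc : c = i0
      · subst hc; exact le_sup_left
      · exact le_trans (le_iSup₂ (f := fun (c : C) (_ : c ≠ i0) => M c) c hc) le_sup_right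
  obtain ⟨θ, hθι, hθu'⟩ : ∃ θ : (Fin m → F) →ₗ[F] (Fin nV → F),
      (∀ v, θ (ι v) = v) ∧ (∀ x ∈ u', θ x = 0) := by
    refine ⟨(LinearEquiv.ofInjective ι hι).symm.toLinearMap ∘ₗ
      (LinearMap.range ι).linearProjOfIsCompl u' hcompl, ?_, ?_⟩
    · intro v
      have hp : (LinearMap.range ι).linearProjOfIsCompl u' hcompl (ι v)
          = ⟨ι v, LinearMap.mem_range_self ι v⟩ :=
        Submodule.linearProjOfIsCompl_apply_left hcompl ⟨ι v, LinearMap.mem_range_self ι v⟩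
      have he : (LinearEquiv.ofInjective ι hι) v = ⟨ι v, LinearMap.mem_range_self ι v⟩ :=
        Subtype.ext (LinearEquiv.ofInjective_apply ι v)
      simp only [LinearMap.comp_apply, hp, ← he]
      exact (LinearEquiv.ofInjective ι hι).symm_apply_apply v
    · intro x hx
      have hp : (LinearMap.range ι).linearProjOfIsCompl u' hcompl x = 0 :=
        Submodule.linearProjOfIsCompl_apply_right hcompl ⟨x, hx⟩
      simp only [LinearMap.comp_apply, hp, map_zero]
  have hMle : ∀ c : C, c ≠ i0 → M c ≤ u' :=
    fun c hc => le_iSup₂ (f := fun (c : C) (_ : c ≠ i0) => M c) c hc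
  have hmemM : ∀ (c : C) (v : Fin nV → F), σ c.1 (ι v) ∈ M c := fun c v =>
    Submodule.mem_map_of_mem (LinearMap.mem_range_self ι v)
  have hσι : ∀ (h : H) (v : Fin nV → F), σ (h : G) (ι v) = ι (ρ h v) := fun h v =>
    LinearMap.congr_fun (hequiv h) v
  have hdec : ∀ g : G, ∃ (c : C) (h : H), g = c.1 * (h : G) := by
    intro g
    obtain ⟨⟨c, h⟩, hx⟩ := hC.2 g
    exact ⟨c, ⟨h.1, h.2⟩, hx.symm⟩
  have hne_i0 : ∀ c : C, c.1 ∉ H → c ≠ i0 := by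
    intro c hc hci
    exact hc (by rw [hci]; exact H.one_mem)
  have hnotH : ∀ c : C, c ≠ i0 → c.1 ∉ H := by
    intro c hc hcH
    exact hc (Subtype.ext (hCH c.1 c.2 hcH))
  have hθg : ∀ g : G, g ∉ H → ∀ v, θ (σ g (ι v)) = 0 := by
    intro g hg v
    obtain ⟨c, h, rfl⟩ := hdec g
    have hc1 : c ≠ i0 := by
      apply hne_i0
      intro hcH
      exact hg (H.mul_mem hcH h.2)
    have hrw : σ (c.1 * (h : G)) (ι v) = σ c.1 (ι (ρ h v)) := by
      rw [map_mul, Module.End.mul_apply, hσι]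
    rw [hrw]
    exact hθu' _ (hMle c hc1 (hmemM c _))
  have hθH : ∀ h : H, θ ∘ₗ (σ (h : G)) = (ρ h : (Fin nV → F) →ₗ[F] (Fin nV → F)) ∘ₗ θ := by
    intro h
    have hker : ∀ c : C, M c ≤ LinearMap.ker
        (θ ∘ₗ (σ (h : G)) - (ρ h : (Fin nV → F) →ₗ[F] (Fin nV → F)) ∘ₗ θ) := by
      intro c x hx
      obtain ⟨y, hy, rfl⟩ := hx
      obtain ⟨v, rfl⟩ := hy
      rw [LinearMap.mem_ker, LinearMap.sub_apply, LinearMap.comp_apply, LinearMap.comp_apply]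
      by_cases hc : c = i0
      · subst hc
        have hσ1 : σ ((i0 : C).1) (ι v) = ι v := by
          rw [hi0]
          show σ (1:G) (ι v) = ι v
          rw [map_one, Module.End.one_apply]
        rw [hσ1, hσι, hθι, hθι]
        exact sub_self _
      · have hcH : c.1 ∉ H := hnotH c hc
        have h2 : σ (h : G) (σ c.1 (ι v)) = σ ((h : G) * c.1) (ι v) := by
          rw [map_mul, Module.End.mul_apply]
        have h3 : (h : G) * c.1 ∉ H := by
          intro hm
          apply hcH
          have := H.mul_mem (H.inv_mem h.2) hm
          simpa using this
        rw [h2, hθg _ h3, hθu' _ (hMle c hc (hmemM c v)), map_zero, sub_self]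
    have hktop : LinearMap.ker
        (θ ∘ₗ (σ (h : G)) - (ρ h : (Fin nV → F) →ₗ[F] (Fin nV → F)) ∘ₗ θ) = ⊤ := by
      rw [eq_top_iff, ← hspan]
      exact iSup_le hker
    exact sub_eq_zero.mp (LinearMap.ker_eq_top.mp hktop)
  obtain ⟨g₀, hg₀⟩ : ∃ g : G, g ∉ H := by
    by_contra hcon
    push_neg at hcon
    exact hHG ((Subgroup.eq_top_iff' H).mpr hcon)
  obtain ⟨θ', hθ'ι, hθ'σ⟩ : ∃ θ' : (Fin m → F) →ₗ[F] (Fin nV → F),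
      (∀ v, θ' (ι v) = 0) ∧ θ' ∘ₗ (σ g₀) = θ := by
    have hg₀inv : g₀⁻¹ ∉ H := fun hm => hg₀ (by simpa using H.inv_mem hm)
    refine ⟨θ ∘ₗ (σ g₀⁻¹), fun v => hθg g₀⁻¹ hg₀inv v, ?_⟩
    apply LinearMap.ext
    intro x
    simp only [LinearMap.comp_apply]
    rw [← Module.End.mul_apply (σ g₀⁻¹) (σ g₀), ← map_mul, inv_mul_cancel, map_one,
      Module.End.one_apply]
  have keyA' : ∀ s ∈ invariants σ, algOf θ' s = algOf θ s := by
    intro s hs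
    have hsg : algOf (σ g₀) s = s := ((mem_invariants_iff σ s).mp hs) g₀
    calc algOf θ' s = algOf θ' (algOf (σ g₀) s) := by rw [hsg]
    _ = algOf (θ' ∘ₗ σ g₀) s := algOf_comp _ _ s
    _ = algOf θ s := by rw [hθ'σ]
  have keyInv : ∀ s ∈ invariants σ, algOf θ s ∈ invariants ρ := by
    intro s hs
    rw [mem_invariants_iff]
    intro h
    rw [algOf_comp, ← hθH h, ← algOf_comp, ((mem_invariants_iff σ s).mp hs) (h : G)]
  set N := Submodule.span F {x : MvPolynomial (Fin nV) F |
      ∃ a b : MvPolynomial (Fin nV) F,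
        a ∈ invariants ρ ∧ MvPolynomial.constantCoeff a = 0 ∧
        MvPolynomial.constantCoeff b = 0 ∧ x = a * b} with hN
  have main : ∀ f ∈ hilbertIdeal σ, ∀ r : MvPolynomial (Fin m) F,
      algOf θ (r * f) - algOf θ' (r * f) ∈ N := by
    intro f hf
    have hf' : f ∈ Ideal.span {p : MvPolynomial (Fin m) F |
        p ∈ invariants σ ∧ constantCoeff p = 0} := hf
    refine Submodule.span_induction
      (p := fun x _ => ∀ r : MvPolynomial (Fin m) F,
        algOf θ (r * x) - algOf θ' (r * x) ∈ N) ?_ ?_ ?_ ?_ hf'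
    · intro s hs r
      obtain ⟨hsinv, hs0⟩ := hs
      rw [map_mul, map_mul, keyA' s hsinv]
      have hfact : algOf θ r * algOf θ s - algOf θ' r * algOf θ s
          = (algOf θ s) * (algOf θ r - algOf θ' r) := by ring
      rw [hfact]
      apply Submodule.subset_span
      refine ⟨algOf θ s, algOf θ r - algOf θ' r, keyInv s hsinv, ?_, ?_, rfl⟩
      · rw [constantCoeff_algOf]; exact hs0
      · rw [map_sub, constantCoeff_algOf, constantCoeff_algOf, sub_self]
    · intro r
      rw [mul_zero, map_zero, map_zero, sub_self]
      exact N.zero_mem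
    · intro x y hx hy ihx ihy r
      rw [mul_add, map_add, map_add, add_sub_add_comm]
      exact N.add_mem (ihx r) (ihy r)
    · intro a x hx ih r
      rw [smul_eq_mul, ← mul_assoc]
      exact ih (r * a)
  have hcc : constantCoeff (algOf ι q) = 0 := by
    have hle : hilbertIdeal σ ≤ RingHom.ker (constantCoeff :
        MvPolynomial (Fin m) F →+* F) :=
      Ideal.span_le.mpr (fun p hp => hp.2)
    exact hle hq
  have hccq : constantCoeff q = 0 := by rw [← constantCoeff_algOf ι q]; exact hcc
  have hθιL : θ ∘ₗ ι = LinearMap.id := LinearMap.ext hθι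
  have hθ'ιL : θ' ∘ₗ ι = 0 := LinearMap.ext (fun v => by
    rw [LinearMap.comp_apply, hθ'ι v, LinearMap.zero_apply])
  have e1 : algOf θ (algOf ι q) = q := by
    rw [algOf_comp, hθιL, algOf_id]
  have e2 : algOf θ' (algOf ι q) = 0 := by
    rw [algOf_comp, hθ'ιL, algOf_zero q hccq]
  have hmain := main (algOf ι q) hq 1
  rw [one_mul, e1, e2, sub_zero] at hmain
  exact hmain


end
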